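/- arXiv:2509.17198 — 2 statements merged into one kernel-verified Lean document; each statement's English description precedes it below -/
import Mathlib

section
/- Certificate of global optimality: suppose ŷ ∈ ℝⁿ satisfies gᵢ(ŷ) = 0 for all i, and there exists λ ∈ ℝ^m with H(λ) ⪰ 0 and H(λ)·[1, ŷᵀ]ᵀ = 0, where H(λ) = [[c₀ - f(ŷ), l₀ᵀ],[l₀, F]] + Σᵢ λᵢ [[cᵢ, lᵢᵀ],[lᵢ, Gᵢ]]. Then ŷ is a global minimizer of f over the feasible set {y : gᵢ(y) = 0 for all i}. -/
open Matrix

/-- The symmetric block matrix `[[c, lᵀ],[l, M]]` indexed by `Unit ⊕ Fin n`. -/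
noncomputable def blockM {n : ℕ} (c : ℝ) (l : Fin n → ℝ) (M : Matrix (Fin n) (Fin n) ℝ) :
    Matrix (Unit ⊕ Fin n) (Unit ⊕ Fin n) ℝ :=
  Matrix.fromBlocks (Matrix.of fun (_ : Unit) (_ : Unit) => c)
    (Matrix.of fun (_ : Unit) j => l j) (Matrix.of fun i (_ : Unit) => l i) M

lemma blockM_quad {n : ℕ} (c : ℝ) (l : Fin n → ℝ) (M : Matrix (Fin n) (Fin n) ℝ)
    (y : Fin n → ℝ) :
    (Sum.elim (fun _ => (1:ℝ)) y) ⬝ᵥ (blockM c l M *ᵥ Sum.elim (fun _ => (1:ℝ)) y)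
      = y ⬝ᵥ (M *ᵥ y) + 2 * (l ⬝ᵥ y) + c := by
  have h : ∀ x : Fin n, x ∈ Finset.univ → 2 * (l x * y x) = y x * l x + l x * y x :=
    fun x _ => by ring
  simp [blockM, dotProduct, mulVec, Matrix.fromBlocks, Fintype.sum_sum_type, Finset.mul_sum,
    Finset.sum_add_distrib, mul_add, add_mul]
  rw [Finset.sum_congr rfl h, Finset.sum_add_distrib]
  ring

/-- Certificate of global optimality: if `ŷ` is feasible and there is `λ` with
`H(λ) = [[c₀ - f(ŷ), l₀ᵀ],[l₀, F]] + ∑ᵢ λᵢ [[cᵢ, lᵢᵀ],[lᵢ, Gᵢ]] ⪰ 0` and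
`H(λ)·[1, ŷᵀ]ᵀ = 0`, then `ŷ` is a global minimizer of `f` over the feasible set. -/
theorem stmt5 {n m : ℕ}
    (F : Matrix (Fin n) (Fin n) ℝ) (hF : F.IsSymm)
    (G : Fin m → Matrix (Fin n) (Fin n) ℝ) (hG : ∀ i, (G i).IsSymm)
    (l₀ : Fin n → ℝ) (l : Fin m → Fin n → ℝ) (c₀ : ℝ) (c : Fin m → ℝ)
    (f : (Fin n → ℝ) → ℝ) (hf : ∀ y, f y = y ⬝ᵥ (F *ᵥ y) + 2 * (l₀ ⬝ᵥ y) + c₀)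
    (g : Fin m → (Fin n → ℝ) → ℝ)
    (hg : ∀ i y, g i y = y ⬝ᵥ (G i *ᵥ y) + 2 * (l i ⬝ᵥ y) + c i)
    (yhat : Fin n → ℝ) (hyhat : ∀ i, g i yhat = 0)
    (lam : Fin m → ℝ)
    (H : Matrix (Unit ⊕ Fin n) (Unit ⊕ Fin n) ℝ)
    (hHdef : H = blockM (c₀ - f yhat) l₀ F + ∑ i, lam i • blockM (c i) (l i) (G i))
    (hHpsd : H.PosSemidef)
    (hHker : H *ᵥ (Sum.elim (fun _ => (1 : ℝ)) yhat) = 0) :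
    ∀ y : Fin n → ℝ, (∀ i, g i y = 0) → f yhat ≤ f y := by
  intro y hgy
  set z : Unit ⊕ Fin n → ℝ := Sum.elim (fun _ => (1:ℝ)) y with hz
  have hpos : 0 ≤ z ⬝ᵥ (H *ᵥ z) := by
    have := hHpsd.dotProduct_mulVec_nonneg z
    simpa using this
  have hquad : z ⬝ᵥ (H *ᵥ z) = f y - f yhat := by
    have hsum : (∑ i, lam i • blockM (c i) (l i) (G i)) *ᵥ z
        = ∑ i, (lam i • blockM (c i) (l i) (G i)) *ᵥ z := by
      ext j
      simp [Matrix.mulVec, Matrix.sum_apply, dotProduct, Finset.sum_mul,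
        Finset.sum_add_distrib]
      rw [Finset.sum_comm]
    rw [hHdef, Matrix.add_mulVec, dotProduct_add, hsum]
    have hdsum : z ⬝ᵥ ∑ i, (lam i • blockM (c i) (l i) (G i)) *ᵥ z
        = ∑ i, z ⬝ᵥ ((lam i • blockM (c i) (l i) (G i)) *ᵥ z) := by
      simp [dotProduct, Finset.mul_sum, Finset.sum_apply, Finset.sum_add_distrib]
      rw [Finset.sum_comm]
    rw [hdsum]
    have h1 : z ⬝ᵥ (blockM (c₀ - f yhat) l₀ F *ᵥ z) = f y - f yhat := by
      rw [hz, blockM_quad, hf y]; ring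
    have h2 : ∀ i : Fin m, i ∈ Finset.univ →
        z ⬝ᵥ ((lam i • blockM (c i) (l i) (G i)) *ᵥ z) = 0 := by
      intro i _
      rw [Matrix.smul_mulVec, dotProduct_smul, hz, blockM_quad, ← hg i y, hgy i,
        smul_zero]
    rw [h1, Finset.sum_congr rfl h2, Finset.sum_const_zero, add_zero]
  linarith [hpos, hquad ▸ hpos]
end

section
/- Uniqueness under corank-1 certificate: with the setup of the previous statement, if additionally corank(H(λ)) = 1 (i.e., the kernel of H(λ) is one-dimensional, spanned by [1, ŷᵀ]ᵀ), then ŷ is the unique global minimizer of the QCQP, and the optimal solution of the Shor SDP relaxation is the rank-1 matrix [1, ŷᵀ]ᵀ[1, ŷᵀ]. -/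
open Matrix

lemma quadform {n : ℕ} (c : ℝ) (l : Fin n → ℝ) (M : Matrix (Fin n) (Fin n) ℝ) (y : Fin n → ℝ) :
    Sum.elim (fun _ => (1:ℝ)) y ⬝ᵥ (blockM c l M *ᵥ Sum.elim (fun _ => (1:ℝ)) y)
      = y ⬝ᵥ (M *ᵥ y) + 2 * (l ⬝ᵥ y) + c := by
  rw [blockM, fromBlocks_mulVec, sumElim_dotProduct_sumElim]
  simp [mulVec, dotProduct, Finset.sum_add_distrib, mul_add, mul_comm, two_mul]
  ring

lemma traceform {n : ℕ} (c : ℝ) (l : Fin n → ℝ) (M Y : Matrix (Fin n) (Fin n) ℝ) (y : Fin n → ℝ) :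
    (blockM c l M *
     (Matrix.fromBlocks (Matrix.of fun (_ : Unit) (_ : Unit) => (1:ℝ))
        (Matrix.of fun (_ : Unit) j => y j) (Matrix.of fun i (_ : Unit) => y i) Y)).trace
      = (M * Y).trace + 2 * (l ⬝ᵥ y) + c := by
  rw [blockM, fromBlocks_multiply]
  simp [Matrix.trace, Matrix.diag, Fintype.sum_sum_type, Matrix.mul_apply, dotProduct,
    Finset.sum_add_distrib, two_mul, mul_comm]
  ring

lemma dot_sum' {I N : Type*} [Fintype N] (s : Finset I) (v : N → ℝ) (w : I → N → ℝ) :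
    v ⬝ᵥ (∑ i ∈ s, w i) = ∑ i ∈ s, v ⬝ᵥ w i := by
  simp only [dotProduct, Finset.sum_apply, Finset.mul_sum]
  rw [Finset.sum_comm]

lemma trace_mul_nonneg' {N : Type*} [Fintype N] [DecidableEq N]
    {H Z : Matrix N N ℝ} (hH : H.PosSemidef) (hZ : Z.PosSemidef) :
    0 ≤ (H * Z).trace ∧ ((H * Z).trace = 0 → H * Z = 0) := by
  obtain ⟨B, rfl⟩ : ∃ B : Matrix N N ℝ, Z = Bᴴ * B := by
    open scoped MatrixOrder Matrix.Norms.L2Operator in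
    exact CStarAlgebra.nonneg_iff_eq_star_mul_self.mp hZ.nonneg
  have hcyc : (H * (Bᴴ * B)).trace = (B * H * Bᴴ).trace := by
    rw [← Matrix.mul_assoc, trace_mul_cycle]
  have hdiag : ∀ j, (B * H * Bᴴ) j j = (fun k => B j k) ⬝ᵥ (H *ᵥ fun k => B j k) := by
    intro j
    simp [Matrix.mul_apply, dotProduct, mulVec, conjTranspose_apply, Finset.mul_sum,
      Finset.sum_mul, mul_comm, mul_left_comm]
    rw [Finset.sum_comm]
    exact Finset.sum_congr rfl fun a _ => Finset.sum_congr rfl fun b _ => by ring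
  have htr : (B * H * Bᴴ).trace = ∑ j, (fun k => B j k) ⬝ᵥ (H *ᵥ fun k => B j k) := by
    rw [Matrix.trace]; exact Finset.sum_congr rfl fun j _ => hdiag j
  have hnn : ∀ j, 0 ≤ (fun k => B j k) ⬝ᵥ (H *ᵥ fun k => B j k) := fun j => by
    simpa using hH.dotProduct_mulVec_nonneg (fun k => B j k)
  constructor
  · rw [hcyc, htr]; exact Finset.sum_nonneg fun j _ => hnn j
  · intro h0
    rw [hcyc, htr] at h0
    have hz : ∀ j, (fun k => B j k) ⬝ᵥ (H *ᵥ fun k => B j k) = 0 := by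
      intro j
      exact le_antisymm (h0 ▸ Finset.single_le_sum (fun j _ => hnn j) (Finset.mem_univ j)) (hnn j)
    have hmv : ∀ j, H *ᵥ (fun k => B j k) = 0 := fun j => by
      have := (hH.dotProduct_mulVec_zero_iff (fun k => B j k)).mp (by simpa using hz j)
      exact this
    have hHB : H * Bᴴ = 0 := by
      ext i j
      have := congrFun (hmv j) i
      simpa [Matrix.mul_apply, mulVec, dotProduct, conjTranspose_apply] using this
    rw [← Matrix.mul_assoc, hHB, Matrix.zero_mul]

/-- Uniqueness under a corank-1 certificate: with a PSD certificate `H(λ)` annihilating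
`[1, ŷᵀ]ᵀ` whose kernel is one-dimensional, `ŷ` is the unique global minimizer of the QCQP,
and any optimal solution of the Shor SDP relaxation is the rank-1 matrix `[1,ŷᵀ]ᵀ[1,ŷᵀ]`. -/
theorem stmt6 {n m : ℕ}
    (F : Matrix (Fin n) (Fin n) ℝ) (hF : F.IsSymm)
    (G : Fin m → Matrix (Fin n) (Fin n) ℝ) (hG : ∀ i, (G i).IsSymm)
    (l₀ : Fin n → ℝ) (l : Fin m → Fin n → ℝ) (c₀ : ℝ) (c : Fin m → ℝ)
    (f : (Fin n → ℝ) → ℝ) (hf : ∀ y, f y = y ⬝ᵥ (F *ᵥ y) + 2 * (l₀ ⬝ᵥ y) + c₀)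
    (g : Fin m → (Fin n → ℝ) → ℝ)
    (hg : ∀ i y, g i y = y ⬝ᵥ (G i *ᵥ y) + 2 * (l i ⬝ᵥ y) + c i)
    (yhat : Fin n → ℝ) (hyhat : ∀ i, g i yhat = 0)
    (lam : Fin m → ℝ)
    (H : Matrix (Unit ⊕ Fin n) (Unit ⊕ Fin n) ℝ)
    (hHdef : H = blockM (c₀ - f yhat) l₀ F + ∑ i, lam i • blockM (c i) (l i) (G i))
    (hHpsd : H.PosSemidef)
    (e : (Unit ⊕ Fin n) → ℝ) (he : e = Sum.elim (fun _ => (1 : ℝ)) yhat)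
    (hHker : H *ᵥ e = 0)
    -- corank 1: the kernel of H(λ) is spanned by `e`
    (hcorank : ∀ v : (Unit ⊕ Fin n) → ℝ, H *ᵥ v = 0 → ∃ t : ℝ, v = t • e) :
    -- ŷ is the unique global minimizer of the QCQP
    (∀ y : Fin n → ℝ, (∀ i, g i y = 0) → f yhat ≤ f y) ∧
    (∀ y : Fin n → ℝ, (∀ i, g i y = 0) → f y = f yhat → y = yhat) ∧
    -- any optimal solution of the Shor SDP relaxation is the rank-1 matrix e eᵀ
    (∀ (Y' : Matrix (Fin n) (Fin n) ℝ) (y' : Fin n → ℝ),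
      (∀ i, (G i * Y').trace + 2 * (l i ⬝ᵥ y') + c i = 0) →
      (Matrix.fromBlocks (Matrix.of fun (_ : Unit) (_ : Unit) => (1 : ℝ))
        (Matrix.of fun (_ : Unit) j => y' j) (Matrix.of fun i (_ : Unit) => y' i) Y').PosSemidef →
      (F * Y').trace + 2 * (l₀ ⬝ᵥ y') + c₀ ≤ f yhat →
      Matrix.fromBlocks (Matrix.of fun (_ : Unit) (_ : Unit) => (1 : ℝ))
        (Matrix.of fun (_ : Unit) j => y' j) (Matrix.of fun i (_ : Unit) => y' i) Y' =
        Matrix.vecMulVec e e) := by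
  -- quadratic form identity
  have hq : ∀ y : Fin n → ℝ,
      Sum.elim (fun _ => (1:ℝ)) y ⬝ᵥ (H *ᵥ Sum.elim (fun _ => (1:ℝ)) y)
        = (f y - f yhat) + ∑ i, lam i * g i y := by
    intro y
    rw [hHdef, Matrix.add_mulVec, dotProduct_add]
    have hsum : (∑ i, lam i • blockM (c i) (l i) (G i)) *ᵥ Sum.elim (fun _ => (1:ℝ)) y
        = ∑ i, lam i • (blockM (c i) (l i) (G i) *ᵥ Sum.elim (fun _ => (1:ℝ)) y) := by
      induction (Finset.univ : Finset (Fin m)) using Finset.induction with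
      | empty => simp [Matrix.zero_mulVec]
      | insert a s hx ih => simp [Finset.sum_insert hx, Matrix.add_mulVec, ih, smul_mulVec]
    rw [hsum, dot_sum', quadform]
    simp only [dotProduct_smul, quadform, smul_eq_mul]
    have hsg : ∑ i, lam i * g i y = ∑ i, lam i * (y ⬝ᵥ (G i *ᵥ y) + 2 * (l i ⬝ᵥ y) + c i) :=
      Finset.sum_congr rfl fun i _ => by rw [hg]
    rw [hf y, hsg]
    ring
  have hnn : ∀ y : Fin n → ℝ, (∀ i, g i y = 0) → 0 ≤ f y - f yhat := by
    intro y hgy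
    have h1 : (0:ℝ) ≤ Sum.elim (fun _ => (1:ℝ)) y ⬝ᵥ (H *ᵥ Sum.elim (fun _ => (1:ℝ)) y) := by
      simpa using hHpsd.dotProduct_mulVec_nonneg (Sum.elim (fun _ => (1:ℝ)) y)
    rw [hq y] at h1
    simpa [hgy] using h1
  refine ⟨fun y hgy => by linarith [hnn y hgy], ?_, ?_⟩
  · -- uniqueness
    intro y hgy hfy
    have h0 : Sum.elim (fun _ => (1:ℝ)) y ⬝ᵥ (H *ᵥ Sum.elim (fun _ => (1:ℝ)) y) = 0 := by
      rw [hq y]; simp [hgy, hfy]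
    have hker : H *ᵥ Sum.elim (fun _ => (1:ℝ)) y = 0 :=
      (hHpsd.dotProduct_mulVec_zero_iff _).mp (by simpa using h0)
    obtain ⟨t, ht⟩ := hcorank _ hker
    have ht1 : t = 1 := by
      have := congrFun ht (Sum.inl ())
      simp [he] at this
      linarith
    funext j
    have h2 := congrFun ht (Sum.inr j)
    rw [ht1, he] at h2
    simpa using h2
  · -- SDP part
    intro Y' y' hgY hZpsd hobj
    set Z := Matrix.fromBlocks (Matrix.of fun (_ : Unit) (_ : Unit) => (1 : ℝ))
        (Matrix.of fun (_ : Unit) j => y' j) (Matrix.of fun i (_ : Unit) => y' i) Y' with hZ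
    have htr : (H * Z).trace
        = ((F * Y').trace + 2 * (l₀ ⬝ᵥ y') + c₀ - f yhat)
          + ∑ i, lam i * ((G i * Y').trace + 2 * (l i ⬝ᵥ y') + c i) := by
      rw [hHdef, Matrix.add_mul, trace_add, Finset.sum_mul, trace_sum]
      rw [traceform]
      congr 1
      · ring
      · refine Finset.sum_congr rfl fun i _ => ?_
        rw [Matrix.smul_mul, trace_smul, traceform]
        simp [smul_eq_mul]
    have htr0 : (H * Z).trace = 0 := by
      have hle : (H * Z).trace ≤ 0 := by
        rw [htr]
        have : ∑ i, lam i * ((G i * Y').trace + 2 * (l i ⬝ᵥ y') + c i) = 0 := by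
          refine Finset.sum_eq_zero fun i _ => ?_
          rw [hgY i]; ring
        rw [this]; linarith
      exact le_antisymm hle (trace_mul_nonneg' hHpsd hZpsd).1
    have hHZ : H * Z = 0 := (trace_mul_nonneg' hHpsd hZpsd).2 htr0
    -- columns of Z are in the kernel of H
    have hcol : ∀ a, H *ᵥ (fun i => Z i a) = 0 := by
      intro a
      funext i
      have := congrFun (congrFun hHZ i) a
      simpa [Matrix.mul_apply, mulVec, dotProduct] using this
    have hZsymm : ∀ a b, Z a b = Z b a := fun a b => by
      have := hZpsd.1.apply b a
      simpa using this
    have ht : ∀ a, ∃ t : ℝ, (fun i => Z i a) = t • e := fun a => hcorank _ (hcol a)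
    have hZ11 : Z (Sum.inl ()) (Sum.inl ()) = 1 := by simp [hZ, fromBlocks]
    have he1 : e (Sum.inl ()) = 1 := by simp [he]
    obtain ⟨t0, ht0⟩ := ht (Sum.inl ())
    have ht0v : t0 = 1 := by
      have := congrFun ht0 (Sum.inl ())
      rw [hZ11] at this
      simpa [he1] using this.symm
    have hcolunit : ∀ a, Z a (Sum.inl ()) = e a := by
      intro a
      have := congrFun ht0 a
      simp [ht0v] at this
      exact this
    ext i a
    obtain ⟨ta, hta⟩ := ht a
    have htav : ta = e a := by
      have h2 := congrFun hta (Sum.inl ())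
      rw [hZsymm (Sum.inl ()) a, hcolunit a] at h2
      simp [he1] at h2
      linarith [h2]
    have := congrFun hta i
    rw [this, htav]
    simp [Matrix.vecMulVec_apply, mul_comm]
end
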